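/- Let 1 ≤ k ≤ r and suppose the index sequence j = (j_1,…,j_r) satisfies v_i = V_{i-1}(j_i,:) ≠ 0 for every i = 1,…,k. Define the oblique projectors Π̃_i := I_n − e_{j_i} (v_i V_{i-1}ᵀ)/‖v_i‖₂² for i = 1,…,k, where e_{j_i} ∈ ℝⁿ is the j_i-th standard basis column vector. Then the k×k matrix E_{J_k}ᵀ V Vᵀ E_{J_k} is invertible and Π̃_1 Π̃_2 ⋯ Π̃_k = I_n − E_{J_k} (E_{J_k}ᵀ V Vᵀ E_{J_k})⁻¹ E_{J_k}ᵀ V Vᵀ. (Since M := VᵀE_{J_k} has full column rank, the right-hand side equals I_n − E_{J_k}(VᵀE_{J_k})† Vᵀ, which is the product formula of Lemma 2.2.) -/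

import Mathlib

open Matrix BigOperators

/-- One step of the ARP recursion: project out the `i`-th row of `W`
(convention: leave `W` unchanged if that row is zero). -/
noncomputable def arpStep {n r : ℕ} (W : Matrix (Fin n) (Fin r) ℝ) (i : Fin n) :
    Matrix (Fin n) (Fin r) ℝ :=
  if W i = 0 then W
  else W * (1 - (∑ l, (W i l) ^ 2)⁻¹ • Matrix.of fun a b => W i a * W i b)

/-- The ARP iterates `V_k`. -/
noncomputable def arpIter {n r : ℕ} (V : Matrix (Fin n) (Fin r) ℝ) (j : Fin r → Fin n) :
    ℕ → Matrix (Fin n) (Fin r) ℝ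
  | 0 => V
  | k + 1 => if h : k < r then arpStep (arpIter V j k) (j ⟨k, h⟩) else arpIter V j k

/-- The ARP weight `w(j) = ∏_{k=1}^r ‖v_k‖²/(r-k+1)`. -/
noncomputable def arpWeight {n r : ℕ} (V : Matrix (Fin n) (Fin r) ℝ) (j : Fin r → Fin n) : ℝ :=
  ∏ k : Fin r, (∑ l, (arpIter V j k.val (j k) l) ^ 2) / ((r : ℝ) - (k.val : ℝ))

/-- The matrix `E_J` whose `k`-th column is the `j_k`-th standard basis vector of ℝⁿ. -/
def EJ {n k : ℕ} (j : Fin k → Fin n) : Matrix (Fin n) (Fin k) ℝ :=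
  Matrix.of fun i l => if i = j l then 1 else 0

/-- Squared Frobenius norm. -/
def frobSq {m n : ℕ} (A : Matrix (Fin m) (Fin n) ℝ) : ℝ := ∑ i, ∑ j, (A i j) ^ 2

namespace ArpAux

variable {n r : ℕ}

lemma transpose_mul_EJ_one (t : Fin n) (M : Matrix (Fin n) (Fin n) ℝ) :
    (EJ (fun _ : Fin 1 => t))ᵀ * M * EJ (fun _ : Fin 1 => t)
      = M t t • (1 : Matrix (Fin 1) (Fin 1) ℝ) := by
  ext a b
  simp [Matrix.mul_apply, EJ, Finset.sum_ite_eq, Finset.sum_ite_eq', ite_mul, mul_ite,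
    Matrix.one_apply, Subsingleton.elim a b]

lemma sq_row_sum (W : Matrix (Fin n) (Fin r) ℝ) (t : Fin n) :
    (W * Wᵀ) t t = ∑ l, (W t l)^2 := by
  simp [Matrix.mul_apply, sq]

lemma row_sum_pos {W : Matrix (Fin n) (Fin r) ℝ} {t : Fin n} (h : W t ≠ 0) :
    0 < ∑ l, (W t l)^2 := by
  obtain ⟨l, hl⟩ := Function.ne_iff.mp h
  exact Finset.sum_pos' (fun i _ => sq_nonneg _)
    ⟨l, Finset.mem_univ l, lt_of_le_of_ne (sq_nonneg _) (Ne.symm (pow_ne_zero 2 hl))⟩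

lemma WN_eq (W : Matrix (Fin n) (Fin r) ℝ) (t : Fin n) :
    (Matrix.of fun a b => W t a * W t b : Matrix (Fin r) (Fin r) ℝ) =
      Wᵀ * EJ (fun _ : Fin 1 => t) * ((EJ (fun _ : Fin 1 => t))ᵀ * W) := by
  ext a b
  simp [Matrix.mul_apply, EJ, Finset.sum_ite_eq, Finset.sum_ite_eq', ite_mul, mul_ite,
    Fin.sum_univ_one]

lemma submatrix_mul_id_left {α β γ δ : Type*} [Fintype β]
    (A : Matrix α β ℝ) (B : Matrix β γ ℝ) (f : δ → α) :
    A.submatrix f id * B = (A * B).submatrix f id := by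
  ext a d; simp [Matrix.mul_apply]

lemma submatrix_mul_both {α β γ δ ε : Type*} [Fintype β]
    (A : Matrix α β ℝ) (B : Matrix β γ ℝ) (f : δ → α) (g : ε → γ) :
    A.submatrix f id * B.submatrix id g = (A * B).submatrix f g := by
  ext a d; simp [Matrix.mul_apply]

lemma EJ_succ {m : ℕ} (f : Fin (m+1) → Fin n) :
    EJ f = (Matrix.fromCols (EJ (fun l : Fin m => f (Fin.castSucc l)))
        (EJ (fun _ : Fin 1 => f (Fin.last m)))).submatrix id ⇑finSumFinEquiv.symm := by
  ext a i
  rcases h : finSumFinEquiv.symm i with l | z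
  · have hi : i = Fin.castAdd 1 l := by
      rw [← finSumFinEquiv_apply_left l, ← h, Equiv.apply_symm_apply]
    subst hi
    simp [EJ, Matrix.fromCols, h, Fin.castSucc]
  · have hz : z = 0 := Subsingleton.elim z 0
    subst hz
    have hi : i = Fin.last m := by
      have h2 : finSumFinEquiv (Sum.inr (0 : Fin 1)) = i := by
        rw [← h, Equiv.apply_symm_apply]
      rw [← h2, finSumFinEquiv_apply_right]
      ext; simp
    subst hi
    simp [EJ, Matrix.fromCols, h]

lemma arp_step_sq (V : Matrix (Fin n) (Fin r) ℝ) (j : Fin r → Fin n) {i : ℕ} (hi : i < r)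
    (hv : arpIter V j i (j ⟨i, hi⟩) ≠ 0) :
    arpIter V j (i+1) * (arpIter V j (i+1))ᵀ =
      arpIter V j i * (arpIter V j i)ᵀ -
        (∑ l, (arpIter V j i (j ⟨i, hi⟩) l)^2)⁻¹ •
          (arpIter V j i * (arpIter V j i)ᵀ *
            (EJ (fun _ : Fin 1 => j ⟨i, hi⟩) * (EJ (fun _ : Fin 1 => j ⟨i, hi⟩))ᵀ) *
            (arpIter V j i * (arpIter V j i)ᵀ)) := by
  set W := arpIter V j i with hW
  set t := j ⟨i, hi⟩ with ht
  set C := EJ (fun _ : Fin 1 => t) with hC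
  set s := (∑ l, (W t l)^2) with hs
  have hsne : s ≠ 0 := ne_of_gt (row_sum_pos hv)
  set N := (Matrix.of fun a b => W t a * W t b : Matrix (Fin r) (Fin r) ℝ) with hN
  have hstep : arpIter V j (i+1) = W * (1 - s⁻¹ • N) := by
    simp only [arpIter, dif_pos hi, arpStep, if_neg hv, ← hW, ← ht, ← hs, ← hN]
  have hNt : Nᵀ = N := by
    ext a b; simp [hN, mul_comm]
  have hNN : N * N = s • N := by
    rw [hN, WN_eq W t, ← hC]
    calc Wᵀ * C * (Cᵀ * W) * (Wᵀ * C * (Cᵀ * W))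
        = Wᵀ * C * ((Cᵀ * (W * Wᵀ) * C) * (Cᵀ * W)) := by
          simp only [Matrix.mul_assoc]
      _ = Wᵀ * C * ((((W * Wᵀ) t t) • (1 : Matrix (Fin 1) (Fin 1) ℝ)) * (Cᵀ * W)) := by
          rw [transpose_mul_EJ_one]
      _ = s • (Wᵀ * C * (Cᵀ * W)) := by
          rw [sq_row_sum, ← hs]
          simp only [Matrix.smul_mul, Matrix.one_mul, Matrix.mul_smul]
  have hidem : (1 - s⁻¹ • N) * (1 - s⁻¹ • N) = 1 - s⁻¹ • N := by
    have h1 : (s⁻¹ • N) * (s⁻¹ • N) = s⁻¹ • N := by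
      rw [Matrix.smul_mul, Matrix.mul_smul, hNN, smul_smul, smul_smul,
        mul_assoc, inv_mul_cancel₀ hsne, mul_one]
    rw [Matrix.sub_mul, Matrix.mul_sub, Matrix.mul_sub, Matrix.one_mul, Matrix.mul_one, h1]
    simp only [Matrix.one_mul]
    abel
  have htr : (W * (1 - s⁻¹ • N))ᵀ = (1 - s⁻¹ • N) * Wᵀ := by
    rw [Matrix.transpose_mul, Matrix.transpose_sub, Matrix.transpose_smul,
      Matrix.transpose_one, hNt]
  rw [hstep, htr]
  calc W * (1 - s⁻¹ • N) * ((1 - s⁻¹ • N) * Wᵀ)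
      = W * ((1 - s⁻¹ • N) * (1 - s⁻¹ • N)) * Wᵀ := by simp only [Matrix.mul_assoc]
    _ = W * (1 - s⁻¹ • N) * Wᵀ := by rw [hidem]
    _ = W * Wᵀ - s⁻¹ • (W * N * Wᵀ) := by
        rw [Matrix.mul_sub, Matrix.sub_mul, Matrix.mul_one, Matrix.mul_smul, Matrix.smul_mul]
    _ = W * Wᵀ - s⁻¹ • (W * Wᵀ * (C * Cᵀ) * (W * Wᵀ)) := by
        rw [hN, WN_eq W t, ← hC]
        simp only [Matrix.mul_assoc]

lemma factor_eq (W : Matrix (Fin n) (Fin r) ℝ) (t : Fin n) :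
    (1 : Matrix (Fin n) (Fin n) ℝ) - (∑ l, (W t l)^2)⁻¹ •
        Matrix.of (fun a b => (if a = t then (1:ℝ) else 0) * ∑ l, W t l * W b l) =
      1 - (∑ l, (W t l)^2)⁻¹ •
        (EJ (fun _ : Fin 1 => t) * (EJ (fun _ : Fin 1 => t))ᵀ * (W * Wᵀ)) := by
  congr 1
  congr 1
  ext a b
  simp [Matrix.mul_apply, EJ, Finset.sum_ite_eq, Finset.sum_ite_eq', ite_mul, mul_ite,
    Fin.sum_univ_one]

lemma block_step {N m : ℕ} (P Pm : Matrix (Fin N) (Fin N) ℝ)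
    (E : Matrix (Fin N) (Fin m) ℝ) (C : Matrix (Fin N) (Fin 1) ℝ)
    (hG : IsUnit (Eᵀ * P * E).det)
    (hPm : Pm = P - P * E * (Eᵀ * P * E)⁻¹ * Eᵀ * P)
    (d : ℝ) (hd : d ≠ 0)
    (hdval : Cᵀ * Pm * C = d • (1 : Matrix (Fin 1) (Fin 1) ℝ)) :
    IsUnit ((fromCols E C)ᵀ * P * fromCols E C).det ∧
      (1 - E * (Eᵀ * P * E)⁻¹ * (Eᵀ * P)) * (1 - d⁻¹ • (C * Cᵀ * Pm)) =
        1 - fromCols E C * ((fromCols E C)ᵀ * P * fromCols E C)⁻¹ *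
          ((fromCols E C)ᵀ * P) ∧
      Pm - d⁻¹ • (Pm * (C * Cᵀ) * Pm) =
        P - P * fromCols E C * ((fromCols E C)ᵀ * P * fromCols E C)⁻¹ *
          (fromCols E C)ᵀ * P := by
  classical
  set G := Eᵀ * P * E with hGdef
  haveI : Invertible G := G.invertibleOfIsUnitDet hG
  have hinvG : ⅟G = G⁻¹ := invOf_eq_nonsing_inv G
  have hschur : Cᵀ * P * C - (Cᵀ * P * E) * ⅟G * (Eᵀ * P * C) = d • 1 := by
    rw [hinvG, ← hdval, hPm]
    simp only [Matrix.mul_sub, Matrix.sub_mul, Matrix.mul_assoc]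
  haveI hsInv : Invertible (Cᵀ * P * C - (Cᵀ * P * E) * ⅟G * (Eᵀ * P * C)) :=
    ⟨d⁻¹ • 1, by rw [hschur]; simp [smul_smul, inv_mul_cancel₀ hd, mul_inv_cancel₀ hd],
      by rw [hschur]; simp [smul_smul, inv_mul_cancel₀ hd, mul_inv_cancel₀ hd]⟩
  have hsval : ⅟(Cᵀ * P * C - (Cᵀ * P * E) * ⅟G * (Eᵀ * P * C)) = d⁻¹ • 1 :=
    invOf_eq_right_inv
      (by rw [hschur]; simp [smul_smul, inv_mul_cancel₀ hd, mul_inv_cancel₀ hd])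
  haveI hBInv : Invertible (fromBlocks G (Eᵀ * P * C) (Cᵀ * P * E) (Cᵀ * P * C)) :=
    Matrix.fromBlocks₁₁Invertible G (Eᵀ * P * C) (Cᵀ * P * E) (Cᵀ * P * C)
  have hF : (fromCols E C)ᵀ * P * fromCols E C
      = fromBlocks G (Eᵀ * P * C) (Cᵀ * P * E) (Cᵀ * P * C) := by
    rw [transpose_fromCols, fromRows_mul, fromRows_mul_fromCols, hGdef]
  have hBinv_eq : (fromBlocks G (Eᵀ * P * C) (Cᵀ * P * E) (Cᵀ * P * C))⁻¹ =
      fromBlocks (G⁻¹ + G⁻¹ * (Eᵀ * P * C) * (d⁻¹ • (1 : Matrix (Fin 1) (Fin 1) ℝ)) *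
          (Cᵀ * P * E) * G⁻¹)
        (-(G⁻¹ * (Eᵀ * P * C) * (d⁻¹ • (1 : Matrix (Fin 1) (Fin 1) ℝ))))
        (-((d⁻¹ • (1 : Matrix (Fin 1) (Fin 1) ℝ)) * (Cᵀ * P * E) * G⁻¹))
        (d⁻¹ • (1 : Matrix (Fin 1) (Fin 1) ℝ)) := by
    rw [← invOf_eq_nonsing_inv, Matrix.invOf_fromBlocks₁₁_eq, hsval, hinvG]
  have key : fromCols E C * ((fromCols E C)ᵀ * P * fromCols E C)⁻¹ *
      (fromCols E C)ᵀ =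
      E * G⁻¹ * Eᵀ + d⁻¹ • ((E * (G⁻¹ * (Eᵀ * P * C)) - C) *
        ((Cᵀ * P * E) * G⁻¹ * Eᵀ - Cᵀ)) := by
    rw [hF, hBinv_eq, transpose_fromCols, fromCols_mul_fromBlocks,
      fromCols_mul_fromRows]
    simp only [Matrix.mul_sub, Matrix.sub_mul, Matrix.mul_add, Matrix.add_mul,
      Matrix.mul_smul, Matrix.smul_mul, Matrix.mul_one, Matrix.one_mul,
      Matrix.neg_mul, Matrix.mul_neg, smul_neg, Matrix.mul_assoc, smul_sub, smul_add]
    module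
  refine ⟨?_, ?_, ?_⟩
  · rw [hF]
    exact Matrix.isUnit_det_of_invertible _
  · have h1 : fromCols E C * ((fromCols E C)ᵀ * P * fromCols E C)⁻¹ *
        ((fromCols E C)ᵀ * P) =
        (fromCols E C * ((fromCols E C)ᵀ * P * fromCols E C)⁻¹ *
          (fromCols E C)ᵀ) * P := by simp only [Matrix.mul_assoc]
    rw [h1, key, hPm]
    simp only [Matrix.mul_sub, Matrix.sub_mul, Matrix.mul_add, Matrix.add_mul,
      Matrix.mul_smul, Matrix.smul_mul, Matrix.mul_one, Matrix.one_mul,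
      smul_sub, smul_add, Matrix.mul_assoc]
    module
  · have h1 : P * fromCols E C * ((fromCols E C)ᵀ * P * fromCols E C)⁻¹ *
        (fromCols E C)ᵀ * P =
        P * (fromCols E C * ((fromCols E C)ᵀ * P * fromCols E C)⁻¹ *
          (fromCols E C)ᵀ) * P := by simp only [Matrix.mul_assoc]
    rw [h1, key, hPm]
    simp only [Matrix.mul_sub, Matrix.sub_mul, Matrix.mul_add, Matrix.add_mul,
      Matrix.mul_smul, Matrix.smul_mul, Matrix.mul_one, Matrix.one_mul,
      smul_sub, smul_add, Matrix.mul_assoc]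
    module

theorem arp_key (V : Matrix (Fin n) (Fin r) ℝ) (j : Fin r → Fin n)
    (m : ℕ) (h1 : 1 ≤ m) : ∀ (hm : m ≤ r),
    (∀ i : Fin r, (i : ℕ) < m → arpIter V j i (j i) ≠ 0) →
    (IsUnit ((EJ (fun l : Fin m => j (Fin.castLE hm l)))ᵀ * (V * Vᵀ) *
        EJ (fun l : Fin m => j (Fin.castLE hm l))).det ∧
      (List.ofFn (fun i : Fin m =>
          (1 : Matrix (Fin n) (Fin n) ℝ) -
            (∑ l, (arpIter V j i (j (Fin.castLE hm i)) l) ^ 2)⁻¹ •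
              Matrix.of (fun a b => (if a = j (Fin.castLE hm i) then (1 : ℝ) else 0) *
                ∑ l, arpIter V j i (j (Fin.castLE hm i)) l * arpIter V j i b l))).prod =
        1 - EJ (fun l : Fin m => j (Fin.castLE hm l)) *
          ((EJ (fun l : Fin m => j (Fin.castLE hm l)))ᵀ * (V * Vᵀ) *
            EJ (fun l : Fin m => j (Fin.castLE hm l)))⁻¹ *
          ((EJ (fun l : Fin m => j (Fin.castLE hm l)))ᵀ * (V * Vᵀ)) ∧
      arpIter V j m * (arpIter V j m)ᵀ =
        V * Vᵀ - (V * Vᵀ) * EJ (fun l : Fin m => j (Fin.castLE hm l)) *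
          ((EJ (fun l : Fin m => j (Fin.castLE hm l)))ᵀ * (V * Vᵀ) *
            EJ (fun l : Fin m => j (Fin.castLE hm l)))⁻¹ *
          (EJ (fun l : Fin m => j (Fin.castLE hm l)))ᵀ * (V * Vᵀ)) := by
  induction m, h1 using Nat.le_induction with
  | base =>
    intro hm hnz
    have h0 : (0 : ℕ) < r := hm
    set P := V * Vᵀ with hPdef
    set t := j ⟨0, h0⟩ with ht
    set C := EJ (fun _ : Fin 1 => t) with hC
    set E := EJ (fun l : Fin 1 => j (Fin.castLE hm l)) with hE
    have hEC : E = C := by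
      ext a l
      obtain rfl : l = (0 : Fin 1) := Subsingleton.elim l 0
      rfl
    set d := ∑ l, (V t l)^2 with hd_def
    have hv : V t ≠ 0 := hnz ⟨0, h0⟩ Nat.zero_lt_one
    have hdne : d ≠ 0 := ne_of_gt (row_sum_pos hv)
    have hG_eq : Eᵀ * P * E = d • (1 : Matrix (Fin 1) (Fin 1) ℝ) := by
      rw [hEC, hPdef, transpose_mul_EJ_one t (V * Vᵀ), sq_row_sum V t]
    have hGinv : (Eᵀ * P * E)⁻¹ = d⁻¹ • (1 : Matrix (Fin 1) (Fin 1) ℝ) := by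
      rw [hG_eq]
      exact Matrix.inv_eq_left_inv
        (by simp [smul_smul, inv_mul_cancel₀ hdne, mul_inv_cancel₀ hdne])
    refine ⟨?_, ?_, ?_⟩
    · rw [hG_eq]
      simp only [Matrix.det_smul, Matrix.det_one, Fintype.card_fin, pow_one, mul_one]
      exact isUnit_iff_ne_zero.mpr hdne
    · simp only [List.ofFn_succ, List.ofFn_zero, List.prod_cons, List.prod_nil, mul_one]
      refine Eq.trans (factor_eq V t) ?_
      rw [hGinv, hEC]
      simp only [Matrix.mul_smul, Matrix.smul_mul, Matrix.mul_one, Matrix.mul_assoc]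
      rfl
    · refine Eq.trans (arp_step_sq V j h0 hv) ?_
      rw [hGinv, hEC, hPdef, hC, hd_def, ht]
      have h00 : arpIter V j 0 = V := rfl
      rw [h00]
      simp only [Matrix.mul_smul, Matrix.smul_mul, Matrix.mul_one, Matrix.mul_assoc]
  | succ m h1m ih =>
    intro hm1 hnz
    have hmr : m < r := hm1
    have hm : m ≤ r := Nat.le_of_succ_le hm1
    obtain ⟨hdet, hprod, hP⟩ := ih hm (fun i hi => hnz i (Nat.lt_succ_of_lt hi))
    set P := V * Vᵀ with hPdef
    set E := EJ (fun l : Fin m => j (Fin.castLE hm l)) with hE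
    set t := j ⟨m, hmr⟩ with ht
    set C := EJ (fun _ : Fin 1 => t) with hC
    set E' := EJ (fun l : Fin (m+1) => j (Fin.castLE hm1 l)) with hE'def
    set Wm := arpIter V j m with hWm
    set d := ∑ l, (Wm t l)^2 with hd_def
    have hvm : Wm t ≠ 0 := hnz ⟨m, hmr⟩ (Nat.lt_succ_self m)
    have hdne : d ≠ 0 := ne_of_gt (row_sum_pos hvm)
    have hdval : Cᵀ * (Wm * Wmᵀ) * C = d • (1 : Matrix (Fin 1) (Fin 1) ℝ) := by
      rw [transpose_mul_EJ_one t (Wm * Wmᵀ), sq_row_sum Wm t]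
    obtain ⟨bs1, bs2, bs3⟩ := block_step P (Wm * Wmᵀ) E C hdet hP d hdne hdval
    have hE' : E' = (fromCols E C).submatrix id ⇑finSumFinEquiv.symm := EJ_succ _
    have hG' : E'ᵀ * P * E' = ((fromCols E C)ᵀ * P * fromCols E C).submatrix
        ⇑finSumFinEquiv.symm ⇑finSumFinEquiv.symm := by
      rw [hE', Matrix.transpose_submatrix, submatrix_mul_id_left, submatrix_mul_both]
    have hdet' : IsUnit (E'ᵀ * P * E').det := by
      rw [hG', Matrix.det_submatrix_equiv_self]
      exact bs1
    have hFB : E' * (E'ᵀ * P * E')⁻¹ * E'ᵀ =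
        fromCols E C * ((fromCols E C)ᵀ * P * fromCols E C)⁻¹ *
          (fromCols E C)ᵀ := by
      rw [hG', Matrix.inv_submatrix_equiv, hE', Matrix.transpose_submatrix,
        Matrix.submatrix_mul_equiv, Matrix.submatrix_mul_equiv, Matrix.submatrix_id_id]
    have hconv : fromCols E C * ((fromCols E C)ᵀ * P * fromCols E C)⁻¹ *
        ((fromCols E C)ᵀ * P) = E' * (E'ᵀ * P * E')⁻¹ * (E'ᵀ * P) := by
      calc fromCols E C * ((fromCols E C)ᵀ * P * fromCols E C)⁻¹ *
            ((fromCols E C)ᵀ * P)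
          = fromCols E C * ((fromCols E C)ᵀ * P * fromCols E C)⁻¹ *
            (fromCols E C)ᵀ * P := (Matrix.mul_assoc _ _ _).symm
        _ = E' * (E'ᵀ * P * E')⁻¹ * E'ᵀ * P := by rw [hFB]
        _ = E' * (E'ᵀ * P * E')⁻¹ * (E'ᵀ * P) := Matrix.mul_assoc _ _ _
    have hconv3 : P * fromCols E C * ((fromCols E C)ᵀ * P * fromCols E C)⁻¹ *
        (fromCols E C)ᵀ * P = P * E' * (E'ᵀ * P * E')⁻¹ * E'ᵀ * P := by
      calc P * fromCols E C * ((fromCols E C)ᵀ * P * fromCols E C)⁻¹ *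
            (fromCols E C)ᵀ * P
          = P * (fromCols E C * ((fromCols E C)ᵀ * P * fromCols E C)⁻¹ *
            (fromCols E C)ᵀ) * P := by simp only [Matrix.mul_assoc]
        _ = P * (E' * (E'ᵀ * P * E')⁻¹ * E'ᵀ) * P := by rw [hFB]
        _ = P * E' * (E'ᵀ * P * E')⁻¹ * E'ᵀ * P := by simp only [Matrix.mul_assoc]
    refine ⟨hdet', ?_, ?_⟩
    · rw [List.ofFn_succ', List.prod_concat]
      refine Eq.trans (congrArg₂ (· * ·) hprod (factor_eq Wm t)) ?_
      refine Eq.trans bs2 ?_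
      rw [hconv]
    · refine Eq.trans (arp_step_sq V j hmr hvm) ?_
      refine Eq.trans bs3 ?_
      rw [hconv3]

end ArpAux

/-- product formula for the rank-one oblique projectors:
`Π̃_1 ⋯ Π̃_k = I − E_{J_k} (E_{J_k}ᵀ V Vᵀ E_{J_k})⁻¹ E_{J_k}ᵀ V Vᵀ`, together with
invertibility of the `k×k` matrix `E_{J_k}ᵀ V Vᵀ E_{J_k}`. -/
theorem arp_oblique_product_formula {n r : ℕ} (hn : 0 < n) (hr : 0 < r) (hrn : r ≤ n)
    (V : Matrix (Fin n) (Fin r) ℝ) (hV : Vᵀ * V = 1)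
    (j : Fin r → Fin n) (k : ℕ) (hk1 : 1 ≤ k) (hkr : k ≤ r)
    (hnz : ∀ i : Fin r, (i : ℕ) < k → arpIter V j i (j i) ≠ 0) :
    IsUnit ((EJ (fun l : Fin k => j (Fin.castLE hkr l)))ᵀ * V * Vᵀ *
        EJ (fun l : Fin k => j (Fin.castLE hkr l))).det ∧
      (List.ofFn (fun i : Fin k =>
          (1 : Matrix (Fin n) (Fin n) ℝ) -
            (∑ l, (arpIter V j i (j (Fin.castLE hkr i)) l) ^ 2)⁻¹ •
              Matrix.of (fun a b => (if a = j (Fin.castLE hkr i) then (1 : ℝ) else 0) *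
                ∑ l, arpIter V j i (j (Fin.castLE hkr i)) l * arpIter V j i b l))).prod =
        1 - EJ (fun l : Fin k => j (Fin.castLE hkr l)) *
          ((EJ (fun l : Fin k => j (Fin.castLE hkr l)))ᵀ * V * Vᵀ *
            EJ (fun l : Fin k => j (Fin.castLE hkr l)))⁻¹ *
          ((EJ (fun l : Fin k => j (Fin.castLE hkr l)))ᵀ * V * Vᵀ) := by
  have hassoc : (EJ (fun l : Fin k => j (Fin.castLE hkr l)))ᵀ * V * Vᵀ
      = (EJ (fun l : Fin k => j (Fin.castLE hkr l)))ᵀ * (V * Vᵀ) := Matrix.mul_assoc _ _ _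
  rw [hassoc]
  obtain ⟨a, b, _⟩ := ArpAux.arp_key V j k hk1 hkr hnz
  exact ⟨a, b⟩
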